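/- For m, n ∈ ℕ with m < n and f analytic on the unit disc belonging to H^{2n}, one has ‖f^m − f^m(0)‖_{H²}^{1/m} ≤ ‖f^n − f^n(0)‖_{H²}^{1/n}. -/

import Mathlib

open Complex Metric Set ENNReal

noncomputable def hardyMean (p : ℝ) (f : ℂ → ℂ) (r : ℝ) : ℝ :=
  (1 / (2 * Real.pi)) * ∫ θ in (0:ℝ)..(2 * Real.pi),
    ‖f ((r : ℂ) * Complex.exp ((θ : ℂ) * Complex.I))‖ ^ p

noncomputable def hardyNorm (p : ℝ) (f : ℂ → ℂ) : ℝ≥0∞ :=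
  ⨆ r ∈ Set.Ioo (0:ℝ) 1, ENNReal.ofReal ((hardyMean p f r) ^ (1 / p))

section Aux

open intervalIntegral MeasureTheory

lemma hardyMean_nonneg (p : ℝ) (g : ℂ → ℂ) (r : ℝ) : 0 ≤ hardyMean p g r := by
  refine mul_nonneg (by positivity) (intervalIntegral.integral_nonneg
    (by positivity) fun θ _ => Real.rpow_nonneg (norm_nonneg _) _)

lemma meanValue {g : ℂ → ℂ} (hg : DifferentiableOn ℂ g (Metric.ball (0:ℂ) 1))
    {r : ℝ} (hr : r ∈ Set.Ioo (0:ℝ) 1) :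
    ∫ θ in (0:ℝ)..(2 * Real.pi), g (circleMap 0 r θ) = (2 * Real.pi) * g 0 := by
  have hsub : closedBall (0:ℂ) r ⊆ ball (0:ℂ) 1 :=
    closedBall_subset_ball (by exact_mod_cast hr.2)
  have hd : DiffContOnCl ℂ g (ball (0:ℂ) r) := by
    refine ⟨hg.mono (ball_subset_ball hr.2.le), ?_⟩
    exact (hg.continuousOn).mono (subset_trans closure_ball_subset_closedBall hsub)
  have h0 : (0:ℂ) ∈ ball (0:ℂ) r := by simpa using hr.1
  have key := hd.circleIntegral_sub_inv_smul h0
  rw [circleIntegral] at key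
  simp only [sub_zero, deriv_circleMap, smul_eq_mul] at key
  have hne : ∀ θ : ℝ, circleMap 0 r θ ≠ 0 := fun θ =>
    circleMap_ne_center (ne_of_gt hr.1)
  have heq : ∫ θ in (0:ℝ)..(2 * Real.pi),
      circleMap 0 r θ * I * ((circleMap 0 r θ)⁻¹ * g (circleMap 0 r θ))
      = I * ∫ θ in (0:ℝ)..(2 * Real.pi), g (circleMap 0 r θ) := by
    rw [← intervalIntegral.integral_const_mul]
    refine intervalIntegral.integral_congr fun θ _ => ?_
    field_simp [hne θ]
  rw [heq] at key
  exact mul_left_cancel₀ I_ne_zero (key.trans (by ring))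

lemma contG {g : ℂ → ℂ} (hg : DifferentiableOn ℂ g (Metric.ball (0:ℂ) 1))
    {r : ℝ} (hr : r ∈ Set.Ioo (0:ℝ) 1) :
    Continuous fun θ : ℝ => g (circleMap 0 r θ) := by
  refine hg.continuousOn.comp_continuous (continuous_circleMap 0 r) fun θ => ?_
  rw [mem_ball_zero_iff]
  simpa [norm_circleMap_zero, _root_.abs_of_pos hr.1] using hr.2

lemma orth {g : ℂ → ℂ} (hg : DifferentiableOn ℂ g (Metric.ball (0:ℂ) 1))
    {r : ℝ} (hr : r ∈ Set.Ioo (0:ℝ) 1) :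
    hardyMean 2 (fun z => g z - g 0) r
      = hardyMean 2 g r - ‖g 0‖ ^ (2:ℝ) := by
  have hG := contG hg hr
  set c := g 0 with hc
  have h2 : ∀ x : ℂ, ‖x‖ ^ (2:ℝ) = Complex.normSq x := fun x => by
    rw [show (2:ℝ) = ((2:ℕ):ℝ) by norm_num, Real.rpow_natCast, Complex.sq_norm]
  have hre : ∫ θ in (0:ℝ)..(2 * Real.pi), (g (circleMap 0 r θ) * (starRingEnd ℂ) c).re
      = (2 * Real.pi) * Complex.normSq c := by
    have : (fun θ : ℝ => (g (circleMap 0 r θ) * (starRingEnd ℂ) c).re)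
        = fun θ : ℝ => Complex.reCLM (g (circleMap 0 r θ) * (starRingEnd ℂ) c) := rfl
    rw [this, ContinuousLinearMap.intervalIntegral_comp_comm (f := fun θ : ℝ => g (circleMap 0 r θ) * (starRingEnd ℂ) c) _
      ((hG.mul continuous_const : Continuous fun θ : ℝ => g (circleMap 0 r θ) * (starRingEnd ℂ) c).intervalIntegrable _ _),
      intervalIntegral.integral_mul_const, meanValue hg hr]
    simp [Complex.mul_conj, Complex.normSq_apply]
    ring
  have expand : ∀ θ : ℝ, Complex.normSq (g (circleMap 0 r θ) - c)
      = Complex.normSq (g (circleMap 0 r θ)) + Complex.normSq c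
        - 2 * (g (circleMap 0 r θ) * (starRingEnd ℂ) c).re :=
    fun θ => Complex.normSq_sub _ _
  have i1 : IntervalIntegrable (fun θ : ℝ => Complex.normSq (g (circleMap 0 r θ)))
      MeasureTheory.volume 0 (2 * Real.pi) :=
    (Complex.continuous_normSq.comp hG).intervalIntegrable _ _
  have i2 : IntervalIntegrable
      (fun θ : ℝ => 2 * (g (circleMap 0 r θ) * (starRingEnd ℂ) c).re)
      MeasureTheory.volume 0 (2 * Real.pi) :=
    (continuous_const.mul (Complex.continuous_re.comp (hG.mul continuous_const))).intervalIntegrable _ _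
  have hint : ∫ θ in (0:ℝ)..(2 * Real.pi), Complex.normSq (g (circleMap 0 r θ) - c)
      = (∫ θ in (0:ℝ)..(2 * Real.pi), Complex.normSq (g (circleMap 0 r θ)))
        - (2 * Real.pi) * Complex.normSq c := by
    rw [intervalIntegral.integral_congr (fun θ _ => expand θ),
      intervalIntegral.integral_sub (i1.add (intervalIntegrable_const)) i2,
      intervalIntegral.integral_add i1 (intervalIntegrable_const),
      intervalIntegral.integral_const, intervalIntegral.integral_const_mul, hre]
    simp only [smul_eq_mul]
    ring
  have conv1 : hardyMean 2 (fun z => g z - c) r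
      = (1 / (2 * Real.pi)) * ∫ θ in (0:ℝ)..(2 * Real.pi),
        Complex.normSq (g (circleMap 0 r θ) - c) := by
    unfold hardyMean
    congr 1
    refine intervalIntegral.integral_congr fun θ _ => ?_
    rw [← circleMap_zero, h2]
  have conv2 : hardyMean 2 g r
      = (1 / (2 * Real.pi)) * ∫ θ in (0:ℝ)..(2 * Real.pi),
        Complex.normSq (g (circleMap 0 r θ)) := by
    unfold hardyMean
    congr 1
    refine intervalIntegral.integral_congr fun θ _ => ?_
    rw [← circleMap_zero, h2]
  rw [conv1, conv2, hint, h2, mul_sub]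
  congr 1
  have hπ : (2 * Real.pi) ≠ 0 := by positivity
  field_simp

lemma jensenStep {G : ℝ → ℝ} (hGc : Continuous G) (hG0 : ∀ θ, 0 ≤ G θ)
    {m n : ℕ} (hm : 1 ≤ m) (hmn : m < n) :
    (1 / (2 * Real.pi)) * (∫ θ in (0:ℝ)..(2 * Real.pi), G θ ^ (2 * m))
      ≤ ((1 / (2 * Real.pi)) * ∫ θ in (0:ℝ)..(2 * Real.pi), G θ ^ (2 * n))
          ^ ((m : ℝ) / n) := by
  have hπ : (0:ℝ) < 2 * Real.pi := by positivity
  set μ : Measure ℝ := volume.restrict (Set.Ioc (0:ℝ) (2 * Real.pi)) with hμ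
  haveI : IsFiniteMeasure μ := by
    constructor
    rw [hμ, Measure.restrict_apply_univ, Real.volume_Ioc]
    exact ENNReal.ofReal_lt_top
  have hmpos : (0:ℝ) < m := by exact_mod_cast hm
  have hnm : (1:ℝ) < (n:ℝ) / m := by
    rw [lt_div_iff₀ hmpos]
    exact_mod_cast by simpa using hmn
  have hconj : ((n:ℝ)/m).HolderConjugate (Real.conjExponent ((n:ℝ)/m)) :=
    Real.HolderConjugate.conjExponent hnm
  obtain ⟨C, hC⟩ := (isCompact_Icc (a := (0:ℝ)) (b := 2*Real.pi)).exists_bound_of_continuousOn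
    ((hGc.pow (2*m)).continuousOn)
  have hmem : MemLp (fun θ => G θ ^ (2*m)) (ENNReal.ofReal ((n:ℝ)/m)) μ := by
    refine MemLp.of_bound ((hGc.pow (2*m)).aestronglyMeasurable) C ?_
    rw [hμ, ae_restrict_iff' measurableSet_Ioc]
    exact Filter.Eventually.of_forall fun θ hθ => hC θ (Set.Ioc_subset_Icc_self hθ)
  have hmem1 : MemLp (fun _ : ℝ => (1:ℝ))
      (ENNReal.ofReal (Real.conjExponent ((n:ℝ)/m))) μ := memLp_const 1
  have holder := MeasureTheory.integral_mul_le_Lp_mul_Lq_of_nonneg hconj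
    (f := fun θ => G θ ^ (2*m)) (g := fun _ => (1:ℝ))
    (Filter.Eventually.of_forall fun θ => pow_nonneg (hG0 θ) _)
    (Filter.Eventually.of_forall fun θ => zero_le_one) hmem hmem1 (μ := μ)
  have e1 : ∀ h : ℝ → ℝ, ∫ θ in (0:ℝ)..(2*Real.pi), h θ = ∫ θ, h θ ∂μ := fun h => by
    rw [intervalIntegral.integral_of_le hπ.le]
  simp only [mul_one, Real.one_rpow] at holder
  have hmne : (m:ℝ) ≠ 0 := ne_of_gt hmpos
  have epow : ∫ θ, (G θ ^ (2*m)) ^ ((n:ℝ)/m) ∂μ = ∫ θ, G θ ^ (2*n) ∂μ := by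
    refine integral_congr_ae (Filter.Eventually.of_forall fun θ => ?_)
    show (G θ ^ (2*m)) ^ ((n:ℝ)/m) = G θ ^ (2*n)
    rw [← Real.rpow_natCast (G θ) (2*m), ← Real.rpow_mul (hG0 θ),
      ← Real.rpow_natCast (G θ) (2*n)]
    congr 1
    field_simp
    push_cast
    ring
  have econst : ∫ _θ, (1:ℝ) ∂μ = 2 * Real.pi := by
    rw [MeasureTheory.integral_const, smul_eq_mul, mul_one, hμ,
      measureReal_restrict_apply_univ, Real.volume_real_Ioc_of_le hπ.le, sub_zero]
  rw [epow, econst] at holder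
  have hq : 1 / Real.conjExponent ((n:ℝ)/m) = 1 - (m:ℝ)/n := by
    have h2 := hconj.inv_add_inv_eq_one
    have h3 : ((n:ℝ)/m)⁻¹ = (m:ℝ)/n := inv_div _ _
    rw [one_div]
    rw [h3] at h2
    linarith
  have h1p2 : 1/((n:ℝ)/m) = (m:ℝ)/n := one_div_div _ _
  rw [hq, h1p2] at holder
  rw [e1, e1]
  set A := ∫ θ, G θ ^ (2*m) ∂μ
  set B := ∫ θ, G θ ^ (2*n) ∂μ with hB
  have hBnn : 0 ≤ B := integral_nonneg fun θ => pow_nonneg (hG0 θ) _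
  have hrw : ((1 / (2 * Real.pi)) * B) ^ ((m:ℝ)/n)
      = (1 / (2 * Real.pi)) ^ ((m:ℝ)/n) * B ^ ((m:ℝ)/n) :=
    Real.mul_rpow (by positivity) hBnn
  rw [hrw]
  have hkey : (1 / (2 * Real.pi)) * (2 * Real.pi) ^ (1 - (m:ℝ)/n)
      = (1 / (2 * Real.pi)) ^ ((m:ℝ)/n) := by
    rw [one_div, ← Real.rpow_neg_one, ← Real.rpow_add hπ, ← Real.rpow_mul hπ.le]
    congr 1
    ring
  calc (1 / (2 * Real.pi)) * A
      ≤ (1 / (2 * Real.pi)) * (B ^ ((m:ℝ)/n) * (2 * Real.pi) ^ (1 - (m:ℝ)/n)) :=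
        mul_le_mul_of_nonneg_left holder (by positivity)
    _ = B ^ ((m:ℝ)/n) * ((1 / (2 * Real.pi)) * (2 * Real.pi) ^ (1 - (m:ℝ)/n)) := by
        ring
    _ = (1 / (2 * Real.pi)) ^ ((m:ℝ)/n) * B ^ ((m:ℝ)/n) := by rw [hkey]; ring

lemma real_superadd {x y q : ℝ} (hx : 0 ≤ x) (hy : 0 ≤ y) (hq : 1 ≤ q) :
    x ^ q + y ^ q ≤ (x + y) ^ q := by
  have h := NNReal.coe_le_coe.mpr (NNReal.add_rpow_le_rpow_add x.toNNReal y.toNNReal hq)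
  simpa [NNReal.coe_rpow, Real.coe_toNNReal x hx, Real.coe_toNNReal y hy] using h

lemma alg {A B c : ℝ} {m n : ℕ} (hm : 1 ≤ m) (hmn : m < n) (hc : 0 ≤ c)
    (hPm : 0 ≤ A - c ^ (2*m)) (hPn : 0 ≤ B - c ^ (2*n))
    (hAB : A ≤ B ^ ((m:ℝ)/(n:ℝ))) :
    (A - c ^ (2*m)) ^ ((1:ℝ)/(2*(m:ℝ))) ≤ (B - c ^ (2*n)) ^ ((1:ℝ)/(2*(n:ℝ))) := by
  have hmpos : (0:ℝ) < m := by exact_mod_cast hm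
  have hnpos : (0:ℝ) < n := by
    exact_mod_cast Nat.lt_of_lt_of_le Nat.zero_lt_one (hm.trans hmn.le)
  have hB0 : 0 ≤ B := le_trans (pow_nonneg hc _) (by linarith)
  set b := B ^ ((1:ℝ)/(2*(n:ℝ))) with hb
  have hb0 : 0 ≤ b := Real.rpow_nonneg hB0 _
  have hbB : b ^ (2*n) = B := by
    rw [hb, ← Real.rpow_natCast (B ^ ((1:ℝ)/(2*(n:ℝ)))) (2*n), ← Real.rpow_mul hB0]
    push_cast
    rw [show 1 / (2*(n:ℝ)) * (2*n) = 1 by field_simp, Real.rpow_one]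
  have hcb : c ≤ b := by
    refine le_of_pow_le_pow_left₀ (n := 2*n) (by omega) hb0 ?_
    rw [hbB]; linarith
  have hbm : B ^ ((m:ℝ)/(n:ℝ)) = b ^ (2*m) := by
    rw [hb, ← Real.rpow_natCast (B ^ ((1:ℝ)/(2*(n:ℝ)))) (2*m), ← Real.rpow_mul hB0]
    congr 1
    push_cast
    field_simp
  have hAb : A ≤ b ^ (2*m) := hbm ▸ hAB
  have hu0 : 0 ≤ b ^ (2*m) - c ^ (2*m) :=
    sub_nonneg.mpr (pow_le_pow_left₀ hc hcb _)
  have hq1 : (1:ℝ) ≤ (n:ℝ)/m := by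
    rw [le_div_iff₀ hmpos]
    exact_mod_cast by simpa using hmn.le
  have hsup := real_superadd hu0 (pow_nonneg hc (2*m)) hq1
  rw [sub_add_cancel] at hsup
  have e1 : (b ^ (2*m) : ℝ) ^ ((n:ℝ)/m) = b ^ (2*n) := by
    rw [← Real.rpow_natCast b (2*m), ← Real.rpow_mul hb0, ← Real.rpow_natCast b (2*n)]
    congr 1
    push_cast
    field_simp
  have e2 : (c ^ (2*m) : ℝ) ^ ((n:ℝ)/m) = c ^ (2*n) := by
    rw [← Real.rpow_natCast c (2*m), ← Real.rpow_mul hc, ← Real.rpow_natCast c (2*n)]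
    congr 1
    push_cast
    field_simp
  rw [e1, e2] at hsup
  have hchain : (A - c ^ (2*m)) ^ ((n:ℝ)/(m:ℝ)) ≤ B - c ^ (2*n) := by
    calc (A - c ^ (2*m)) ^ ((n:ℝ)/(m:ℝ))
        ≤ (b ^ (2*m) - c ^ (2*m)) ^ ((n:ℝ)/(m:ℝ)) :=
          Real.rpow_le_rpow hPm (by linarith) (by positivity)
      _ ≤ B - c ^ (2*n) := by rw [← hbB]; linarith
  have final := Real.rpow_le_rpow (Real.rpow_nonneg hPm _) hchain
    (by positivity : (0:ℝ) ≤ 1/(2*(n:ℝ)))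
  rw [← Real.rpow_mul hPm] at final
  rw [show (n:ℝ)/(m:ℝ) * (1/(2*(n:ℝ))) = 1/(2*(m:ℝ)) by field_simp] at final
  exact final

end Aux

theorem hardy_power_norm_monotone (m n : ℕ) (hm : 1 ≤ m) (hmn : m < n)
    (f : ℂ → ℂ) (hf : DifferentiableOn ℂ f (Metric.ball (0:ℂ) 1))
    (hfn : hardyNorm (2 * n) f ≠ ⊤) :
    (hardyNorm 2 (fun z => f z ^ m - f 0 ^ m)) ^ (1 / (m : ℝ))
      ≤ (hardyNorm 2 (fun z => f z ^ n - f 0 ^ n)) ^ (1 / (n : ℝ)) := by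
  have hmR : (0:ℝ) < m := by exact_mod_cast hm
  have hnR : (0:ℝ) < n := by
    exact_mod_cast Nat.lt_of_lt_of_le Nat.zero_lt_one (hm.trans hmn.le)
  -- pointwise key inequality
  have key : ∀ r ∈ Set.Ioo (0:ℝ) 1,
      (ENNReal.ofReal ((hardyMean 2 (fun z => f z ^ m - f 0 ^ m) r) ^ (1/(2:ℝ)))) ^ (1/(m:ℝ))
        ≤ (ENNReal.ofReal ((hardyMean 2 (fun z => f z ^ n - f 0 ^ n) r) ^ (1/(2:ℝ)))) ^ (1/(n:ℝ)) := by
    intro r hr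
    set G : ℝ → ℝ := fun θ => ‖f (circleMap 0 r θ)‖ with hGdef
    set c : ℝ := ‖f 0‖ with hcdef
    have hGc : Continuous G := continuous_norm.comp (contG hf hr)
    have hG0 : ∀ θ, 0 ≤ G θ := fun θ => norm_nonneg _
    have hc0 : 0 ≤ c := norm_nonneg _
    have conv : ∀ k : ℕ, hardyMean 2 (fun z => f z ^ k) r
        = (1/(2*Real.pi)) * ∫ θ in (0:ℝ)..(2*Real.pi), G θ ^ (2*k) := by
      intro k
      unfold hardyMean
      congr 1
      refine intervalIntegral.integral_congr fun θ _ => ?_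
      rw [← circleMap_zero]
      show ‖(f (circleMap 0 r θ)) ^ k‖ ^ (2:ℝ) = G θ ^ (2*k)
      rw [norm_pow, show (2:ℝ) = ((2:ℕ):ℝ) by norm_num, Real.rpow_natCast,
        ← pow_mul, mul_comm k 2]
    have habs : ∀ k : ℕ, ‖f 0 ^ k‖ ^ (2:ℝ) = c ^ (2*k) := fun k => by
      rw [norm_pow, show (2:ℝ) = ((2:ℕ):ℝ) by norm_num, Real.rpow_natCast,
        ← pow_mul, mul_comm k 2]
    have orthm : hardyMean 2 (fun z => f z ^ m - f 0 ^ m) r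
        = (1/(2*Real.pi)) * (∫ θ in (0:ℝ)..(2*Real.pi), G θ ^ (2*m)) - c ^ (2*m) := by
      have h := orth (g := fun z => f z ^ m) (hf.pow m) hr
      rw [show hardyMean 2 (fun z => (fun z => f z ^ m) z - (fun z => f z ^ m) 0) r
        = hardyMean 2 (fun z => f z ^ m - f 0 ^ m) r from rfl] at h
      rw [h, conv m]
      congr 1
      exact habs m
    have orthn : hardyMean 2 (fun z => f z ^ n - f 0 ^ n) r
        = (1/(2*Real.pi)) * (∫ θ in (0:ℝ)..(2*Real.pi), G θ ^ (2*n)) - c ^ (2*n) := by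
      have h := orth (g := fun z => f z ^ n) (hf.pow n) hr
      rw [show hardyMean 2 (fun z => (fun z => f z ^ n) z - (fun z => f z ^ n) 0) r
        = hardyMean 2 (fun z => f z ^ n - f 0 ^ n) r from rfl] at h
      rw [h, conv n]
      congr 1
      exact habs n
    have h0m : 0 ≤ hardyMean 2 (fun z => f z ^ m - f 0 ^ m) r := hardyMean_nonneg _ _ _
    have h0n : 0 ≤ hardyMean 2 (fun z => f z ^ n - f 0 ^ n) r := hardyMean_nonneg _ _ _
    have jens := jensenStep hGc hG0 hm hmn
    have algr := alg hm hmn hc0 (orthm ▸ h0m) (orthn ▸ h0n) jens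
    rw [← orthm, ← orthn] at algr
    rw [ENNReal.ofReal_rpow_of_nonneg (Real.rpow_nonneg h0m _) (by positivity),
      ENNReal.ofReal_rpow_of_nonneg (Real.rpow_nonneg h0n _) (by positivity),
      ← Real.rpow_mul h0m, ← Real.rpow_mul h0n]
    refine ENNReal.ofReal_le_ofReal ?_
    rw [show 1/(2:ℝ) * (1/(m:ℝ)) = 1/(2*(m:ℝ)) by field_simp,
      show 1/(2:ℝ) * (1/(n:ℝ)) = 1/(2*(n:ℝ)) by field_simp]
    exact algr
  -- assemble via suprema
  rw [hardyNorm, hardyNorm]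
  set u : ℝ → ℝ≥0∞ := fun r =>
    ENNReal.ofReal ((hardyMean 2 (fun z => f z ^ m - f 0 ^ m) r) ^ (1/(2:ℝ))) with hu
  set v : ℝ → ℝ≥0∞ := fun r =>
    ENNReal.ofReal ((hardyMean 2 (fun z => f z ^ n - f 0 ^ n) r) ^ (1/(2:ℝ))) with hv
  set R : ℝ≥0∞ := ⨆ r ∈ Set.Ioo (0:ℝ) 1, v r with hR
  have hL : (⨆ r ∈ Set.Ioo (0:ℝ) 1, u r) ≤ R ^ ((1/(n:ℝ)) * m) := by
    refine iSup₂_le fun r hr => ?_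
    calc u r = (u r ^ (1/(m:ℝ))) ^ (m:ℝ) := by
          rw [← ENNReal.rpow_mul, one_div, inv_mul_cancel₀ (ne_of_gt hmR),
            ENNReal.rpow_one]
      _ ≤ (v r ^ (1/(n:ℝ))) ^ (m:ℝ) := ENNReal.rpow_le_rpow (key r hr) hmR.le
      _ = (v r) ^ ((1/(n:ℝ)) * m) := by rw [← ENNReal.rpow_mul]
      _ ≤ R ^ ((1/(n:ℝ)) * m) := by
          refine ENNReal.rpow_le_rpow ?_ (by positivity)
          exact le_iSup₂ (f := fun r (_ : r ∈ Set.Ioo (0:ℝ) 1) => v r) r hr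
  calc (⨆ r ∈ Set.Ioo (0:ℝ) 1, u r) ^ (1/(m:ℝ))
      ≤ (R ^ ((1/(n:ℝ)) * m)) ^ (1/(m:ℝ)) := ENNReal.rpow_le_rpow hL (by positivity)
    _ = R ^ (1/(n:ℝ)) := by
        rw [← ENNReal.rpow_mul]
        congr 1
        field_simp
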